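/- Suppose {Kᵢ}_{i∈V} and {Kᵢ'}_{i∈V} are dust-like graph-directed sets on the same finite directed graph (V,Γ), satisfying Kᵢ = ⋃_{j∈V} ⋃_{e∈E_{ij}} S_e(K_j) and Kᵢ' = ⋃_{j∈V} ⋃_{e∈E_{ij}} S_e'(K_j') with both unions disjoint, where for each edge e the similarities S_e and S_e' on ℝ^d have the same contraction ratio r_e < 1 along cycles (product of ratios over any cycle < 1). Then Kᵢ and Kᵢ' are Lipschitz equivalent for each i ∈ V. -/

import Mathlib

noncomputable section

open Set Metric MeasureTheory

/-- Distance between two sets. -/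
def setDist {X : Type*} [MetricSpace X] (A B : Set X) : ℝ := sInf (Set.image2 dist A B)

/-- Lipschitz equivalence of two sets: a bi-Lipschitz bijection between them. -/
def LipEquivOn {X Y : Type*} [MetricSpace X] [MetricSpace Y] (E : Set X) (F : Set Y) : Prop :=
  ∃ (f : X → Y) (c c' : ℝ), 0 < c ∧ c ≤ c' ∧ Set.BijOn f E F ∧
    ∀ x ∈ E, ∀ y ∈ E, c * dist x y ≤ dist (f x) (f y) ∧ dist (f x) (f y) ≤ c' * dist x y

/-- The affine contraction `x ↦ ρ i * x + t i`. -/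
def affMap (r t : ℕ → ℝ) (i : ℕ) (x : ℝ) : ℝ := r i * x + t i

/-- Composition of the affine maps along a word (first letter outermost). -/
def affWord (r t : ℕ → ℝ) : List ℕ → ℝ → ℝ
  | [] => id
  | i :: w => affMap r t i ∘ affWord r t w

/-- Cylinder of a general IFS for a word over `Fin n`. -/
def cylW {X : Type*} {n : ℕ} (Ψ : Fin n → X → X) (F : Set X) (w : List (Fin n)) : Set X :=
  (w.foldr (fun i g => Ψ i ∘ g) id) '' F

/-- A (separable) contraction vector `(ρ 0, …, ρ (n-1))` in `ℝ`. -/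
structure ContractionVec (n : ℕ) (ρ : ℕ → ℝ) : Prop where
  three_le : 3 ≤ n
  pos : ∀ i, i < n → 0 < ρ i
  lt_one : ∀ i, i < n → ρ i < 1
  sum_lt : (∑ i ∈ Finset.range n, ρ i) < 1

/-- The touching IFS of the standing setup, together with its attractor `T`. -/
structure TouchingIFS (n : ℕ) (ρ : ℕ → ℝ) where
  t : ℕ → ℝ
  T : Set ℝ
  order : ∀ i, i + 1 < n → affMap ρ t i 1 ≤ affMap ρ t (i + 1) 0
  left0 : affMap ρ t 0 0 = 0
  right1 : affMap ρ t (n - 1) 1 = 1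
  touch_ex : ∃ i, i + 1 < n ∧ affMap ρ t i 1 = affMap ρ t (i + 1) 0
  compactT : IsCompact T
  nonemptyT : T.Nonempty
  invT : T = ⋃ i ∈ Finset.range n, affMap ρ t i '' T

/-- The dust-like, equally spaced IFS of the standing setup, with attractor `D`. -/
structure DustIFS (n : ℕ) (ρ : ℕ → ℝ) where
  d : ℕ → ℝ
  D : Set ℝ
  left0 : affMap ρ d 0 0 = 0
  right1 : affMap ρ d (n - 1) 1 = 1
  equal_gap : ∀ i, i + 1 < n →
    affMap ρ d (i + 1) 0 - affMap ρ d i 1 = (1 - ∑ j ∈ Finset.range n, ρ j) / (n - 1)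
  compactD : IsCompact D
  nonemptyD : D.Nonempty
  invD : D = ⋃ i ∈ Finset.range n, affMap ρ d i '' D

variable {n : ℕ} {ρ : ℕ → ℝ}

/-- Cylinder `T_w`. -/
def TouchingIFS.cyl (S : TouchingIFS n ρ) (w : List ℕ) : Set ℝ := affWord ρ S.t w '' S.T

/-- `i` is a (left) touching letter. -/
def TouchingIFS.touch (S : TouchingIFS n ρ) (i : ℕ) : Prop :=
  i + 1 < n ∧ affMap ρ S.t i 1 = affMap ρ S.t (i + 1) 0

/-- Left touching patch `L_k(T_w)` (with `α` the initial touching run length). -/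
def TouchingIFS.patchL (S : TouchingIFS n ρ) (α : ℕ) (w : List ℕ) (k : ℕ) : Set ℝ :=
  ⋃ j ∈ Finset.range α, S.cyl (w ++ List.replicate k 0 ++ [j])

/-- Right touching patch `R_k(T_w)` (with `β` the final touching run length). -/
def TouchingIFS.patchR (S : TouchingIFS n ρ) (β : ℕ) (w : List ℕ) (k : ℕ) : Set ℝ :=
  ⋃ j ∈ Finset.Ico (n - β) n, S.cyl (w ++ List.replicate k (n - 1) ++ [j])

/-- `α` is the number of successive touching intervals at the beginning. -/
def TouchingIFS.alphaRun (S : TouchingIFS n ρ) (α : ℕ) : Prop :=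
  1 ≤ α ∧ α < n ∧ (∀ i, i + 1 < α → S.touch i) ∧ ¬ S.touch (α - 1)

/-- `β` is the number of successive touching intervals at the end. -/
def TouchingIFS.betaRun (S : TouchingIFS n ρ) (β : ℕ) : Prop :=
  1 ≤ β ∧ β < n ∧ (∀ i, n - β ≤ i → i + 1 < n → S.touch i) ∧ ¬ S.touch (n - β - 1)

/-- Cylinder `D_w`. -/
def DustIFS.cyl (Q : DustIFS n ρ) (w : List ℕ) : Set ℝ := affWord ρ Q.d w '' Q.D

/-- Left patch `L_k(D_w)`. -/
def DustIFS.patchL (Q : DustIFS n ρ) (α : ℕ) (w : List ℕ) (k : ℕ) : Set ℝ :=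
  ⋃ j ∈ Finset.range α, Q.cyl (w ++ List.replicate k 0 ++ [j])

/-- Right patch `R_k(D_w)`. -/
def DustIFS.patchR (Q : DustIFS n ρ) (β : ℕ) (w : List ℕ) (k : ℕ) : Set ℝ :=
  ⋃ j ∈ Finset.Ico (n - β) n, Q.cyl (w ++ List.replicate k (n - 1) ++ [j])

/-- `τ k` is the unique positive integer with `ρₙᵏ ρ₁ < ρ₁ ^ τ(k) ≤ ρₙᵏ`. -/
def tauSpec (ρ : ℕ → ℝ) (n : ℕ) (τ : ℕ → ℕ) : Prop :=
  ∀ k, 1 ≤ k → 1 ≤ τ k ∧ ρ (n - 1) ^ k * ρ 0 < ρ 0 ^ τ k ∧ ρ 0 ^ τ k ≤ ρ (n - 1) ^ k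

/-- `Cᵏ = R_k(T_{i₀}) ∪ L_{τ(k)}(T_{i₀+1})`. -/
def Cset (S : TouchingIFS n ρ) (α β i₀ : ℕ) (τ : ℕ → ℕ) (k : ℕ) : Set ℝ :=
  S.patchR β [i₀] k ∪ S.patchL α [i₀ + 1] (τ k)

/-- The touching letter `i` is left substitutable. -/
def TouchingIFS.LeftSub (S : TouchingIFS n ρ) (α : ℕ) (i : ℕ) : Prop :=
  ∃ (w : List ℕ) (a : ℕ) (k k' : ℕ), (∀ b ∈ w ++ [a], b < n) ∧
    Metric.diam (S.patchL α [i + 1] k) = Metric.diam (S.patchL α (i :: (w ++ [a])) k') ∧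
    a ≠ 0 ∧ ∀ ℓ, S.touch ℓ → a ≠ ℓ + 1

/-- The touching letter `i` is right substitutable. -/
def TouchingIFS.RightSub (S : TouchingIFS n ρ) (β : ℕ) (i : ℕ) : Prop :=
  ∃ (w : List ℕ) (a : ℕ) (k k' : ℕ), (∀ b ∈ w ++ [a], b < n) ∧
    Metric.diam (S.patchR β [i] k) = Metric.diam (S.patchR β ((i + 1) :: (w ++ [a])) k') ∧
    a ≠ n - 1 ∧ ¬ S.touch a

/-- Convex hull of a bounded set of reals: the minimal closed interval containing it. -/
def CH (B : Set ℝ) : Set ℝ := Set.Icc (sInf B) (sSup B)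

/-- `[a,b]` is a maximal run of touching letters (a first-level connected component). -/
def TouchingIFS.run (S : TouchingIFS n ρ) (a b : ℕ) : Prop :=
  a ≤ b ∧ b < n ∧ (∀ i, a ≤ i → i < b → S.touch i) ∧
  (a = 0 ∨ ¬ S.touch (a - 1)) ∧ (b = n - 1 ∨ ¬ S.touch b)

/-- Membership in the class `𝒯⁽¹⁾`: a `T`-separate copy `Ψ_w(T⁽¹⁾_j)`. -/
def TouchingIFS.T1mem (S : TouchingIFS n ρ) (X : Set ℝ) : Prop :=
  ∃ (w : List ℕ) (a b : ℕ), (∀ c ∈ w, c < n) ∧ S.run a b ∧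
    X = affWord ρ S.t w '' (⋃ j ∈ Finset.Icc a b, S.cyl [j]) ∧
    0 < setDist X (S.T \ X)

/-- Membership in the class `𝒯⁽²⁾`: a copy `Ψ_w(T⁽²⁾_i) = Ψ_w(R₀(T_i) ∪ L₀(T_{i+1}))`. -/
def TouchingIFS.T2mem (S : TouchingIFS n ρ) (α β : ℕ) (X : Set ℝ) : Prop :=
  ∃ (w : List ℕ) (i : ℕ), (∀ c ∈ w, c < n) ∧ S.touch i ∧
    X = affWord ρ S.t w '' (S.patchR β [i] 0 ∪ S.patchL α [i + 1] 0)

/-- An admissible family for the simple decomposition of `E` by the `A i`. -/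
def GoodFam (E : Set ℝ) {k : ℕ} (A : Fin k → Set ℝ) (𝒮 : Finset (Set ℝ)) : Prop :=
  (∀ B ∈ 𝒮, IsCompact B ∧ B ⊆ E) ∧ (⋃ B ∈ 𝒮, B) = E ∧
  (∀ B ∈ 𝒮, ∀ B' ∈ 𝒮, B ≠ B' → CH B ∩ CH B' = ∅) ∧ (∀ i, A i ∈ 𝒮)

set_option linter.unusedSectionVars false
set_option maxHeartbeats 1000000

section GDAux
variable {X : Type*} [MetricSpace X] {V ι : Type}

def gdCompS (S : ι → X → X) (e : ℕ → ι) : ℕ → X → X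
  | 0 => id
  | (m+1) => gdCompS S e m ∘ S (e m)

def gdIsPath (src tgt : ι → V) (v : V) (e : ℕ → ι) : Prop :=
  src (e 0) = v ∧ ∀ k, tgt (e k) = src (e (k+1))

def gdCyl (S : ι → X → X) (src : ι → V) (K : V → Set X) (e : ℕ → ι) (m : ℕ) : Set X :=
  gdCompS S e m '' K (src (e m))

lemma gdCompS_congr (S : ι → X → X) {e e' : ℕ → ι} {m : ℕ} (h : ∀ k < m, e k = e' k) :
    gdCompS S e m = gdCompS S e' m := by
  induction m with
  | zero => rfl
  | succ m ih =>
      have h1 : gdCompS S e m = gdCompS S e' m :=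
        ih (fun k hk => h k (hk.trans (Nat.lt_succ_self m)))
      show gdCompS S e m ∘ S (e m) = gdCompS S e' m ∘ S (e' m)
      rw [h1, h m (Nat.lt_succ_self m)]

lemma gdCompS_dist {S : ι → X → X} {r : ι → ℝ}
    (hS : ∀ i x y, dist (S i x) (S i y) = r i * dist x y) (e : ℕ → ι) (m : ℕ) (x y : X) :
    dist (gdCompS S e m x) (gdCompS S e m y) = (∏ k ∈ Finset.range m, r (e k)) * dist x y := by
  induction m generalizing x y with
  | zero => simp [gdCompS]
  | succ m ih =>
      show dist (gdCompS S e m (S (e m) x)) (gdCompS S e m (S (e m) y)) = _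
      rw [ih (S (e m) x) (S (e m) y), hS, Finset.prod_range_succ]; ring

lemma gdS_continuous {S : ι → X → X} {r : ι → ℝ} (hr : ∀ i, 0 < r i)
    (hS : ∀ i x y, dist (S i x) (S i y) = r i * dist x y) (i : ι) :
    Continuous (S i) := by
  refine (LipschitzWith.of_dist_le_mul (K := (r i).toNNReal) ?_).continuous
  intro x y
  rw [hS, Real.coe_toNNReal _ (hr i).le]

lemma gdCompS_continuous {S : ι → X → X} {r : ι → ℝ} (hr : ∀ i, 0 < r i)
    (hS : ∀ i x y, dist (S i x) (S i y) = r i * dist x y) (e : ℕ → ι) (m : ℕ) :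
    Continuous (gdCompS S e m) := by
  induction m with
  | zero => exact continuous_id
  | succ m ih => exact ih.comp (gdS_continuous hr hS (e m))

lemma gdCompS_injective {S : ι → X → X} {r : ι → ℝ} (hr : ∀ i, 0 < r i)
    (hS : ∀ i x y, dist (S i x) (S i y) = r i * dist x y) (e : ℕ → ι) (m : ℕ) :
    Function.Injective (gdCompS S e m) := by
  intro x y h
  have h2 := gdCompS_dist hS e m x y
  rw [h, dist_self] at h2
  have hp : 0 < ∏ k ∈ Finset.range m, r (e k) :=
    Finset.prod_pos (fun k _ => hr (e k))
  have h3 : dist x y = 0 := by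
    rcases mul_eq_zero.1 h2.symm with h' | h'
    · exact absurd h' hp.ne'
    · exact h'
  exact dist_eq_zero.1 h3

lemma gd_disjoint_dist {A B : Set X} (hA : IsCompact A) (hB : IsClosed B)
    (hAne : A.Nonempty) (hBne : B.Nonempty) (hd : A ∩ B = ∅) :
    ∃ δ > 0, ∀ p ∈ A, ∀ q ∈ B, δ ≤ dist p q := by
  obtain ⟨x₀, hx₀, hmin⟩ := hA.exists_isMinOn hAne (continuous_infDist_pt B).continuousOn
  refine ⟨infDist x₀ B, ?_, ?_⟩
  · rw [gt_iff_lt, ← hB.notMem_iff_infDist_pos hBne]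
    intro hmem
    exact absurd (Set.mem_inter hx₀ hmem) (by rw [hd]; exact notMem_empty x₀)
  · intro p hp q hq
    exact le_trans (hmin hp) (infDist_le_dist_of_mem hq)

lemma gd_coding [Fintype V] [Fintype ι]
    (src tgt : ι → V) (r : ι → ℝ) (S : ι → X → X)
    (hr : ∀ e, 0 < r e)
    (hS : ∀ e x y, dist (S e x) (S e y) = r e * dist x y)
    (K : V → Set X) (hKc : ∀ v, IsCompact (K v)) (hKne : ∀ v, (K v).Nonempty)
    (hKeq : ∀ v, K v = ⋃ e ∈ {e | src e = v}, S e '' K (tgt e))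
    (hKdisj : ∀ e f, src e = src f → e ≠ f → (S e '' K (tgt e)) ∩ (S f '' K (tgt f)) = ∅)
    (hdecay : ∀ e : ℕ → ι, (∀ k, tgt (e k) = src (e (k+1))) →
       Filter.Tendsto (fun m => ∏ k ∈ Finset.range m, r (e k)) Filter.atTop (nhds 0))
    (hι : Nonempty ι) :
    ∃ (π : (ℕ → ι) → X) (addr : V → X → (ℕ → ι)) (δ D : ℝ),
      0 < δ ∧ δ ≤ 1 ∧ 1 ≤ D ∧
      (∀ v e, gdIsPath src tgt v e → ∀ m, π e ∈ gdCyl S src K e m) ∧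
      (∀ v x, x ∈ K v → gdIsPath src tgt v (addr v x) ∧ ∀ m, x ∈ gdCyl S src K (addr v x) m) ∧
      (∀ v e x, gdIsPath src tgt v e → (∀ m, x ∈ gdCyl S src K e m) → addr v x = e) ∧
      (∀ v e x y, gdIsPath src tgt v e → (∀ m, x ∈ gdCyl S src K e m) →
        (∀ m, y ∈ gdCyl S src K e m) → x = y) ∧
      (∀ v a b m x y, gdIsPath src tgt v a → gdIsPath src tgt v b →
        (∀ k < m, a k = b k) → a m ≠ b m →
        (∀ j, x ∈ gdCyl S src K a j) → (∀ j, y ∈ gdCyl S src K b j) →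
        (∏ k ∈ Finset.range m, r (a k)) * δ ≤ dist x y ∧
          dist x y ≤ (∏ k ∈ Finset.range m, r (a k)) * D) := by
  classical
  haveI := hι
  -- pieces sit inside K of the source
  have hpiece : ∀ i, S i '' K (tgt i) ⊆ K (src i) := by
    intro i
    conv_rhs => rw [hKeq (src i)]
    exact Set.subset_biUnion_of_mem (u := fun e => S e '' K (tgt e))
      (show i ∈ {e | src e = src i} from rfl)
  have hcylc : ∀ e m, IsCompact (gdCyl S src K e m) :=
    fun e m => ((hKc _).image (gdCompS_continuous hr hS e m))
  have hcylne : ∀ e m, (gdCyl S src K e m).Nonempty :=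
    fun e m => (hKne _).image _
  have hmono : ∀ e : ℕ → ι, (∀ k, tgt (e k) = src (e (k+1))) →
      ∀ m, gdCyl S src K e (m+1) ⊆ gdCyl S src K e m := by
    intro e hch m
    show (gdCompS S e m ∘ S (e m)) '' K (src (e (m+1))) ⊆ gdCompS S e m '' K (src (e m))
    rw [Set.image_comp]
    refine Set.image_mono ?_
    rw [← hch m]
    exact hpiece (e m)
  -- the diameter bound D
  have hDex : ∃ D : ℝ, 1 ≤ D ∧ ∀ w, Metric.diam (K w) ≤ D := by
    rcases isEmpty_or_nonempty V with hV | hV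
    · exact ⟨1, le_refl 1, fun w => (hV.elim w)⟩
    · set GD : Finset ℝ := insert 1 (Finset.univ.image (fun w => Metric.diam (K w)))
      refine ⟨GD.max' ⟨1, Finset.mem_insert_self _ _⟩,
        Finset.le_max' _ 1 (Finset.mem_insert_self _ _), fun w => Finset.le_max' _ _ ?_⟩
      exact Finset.mem_insert_of_mem (Finset.mem_image_of_mem _ (Finset.mem_univ w))
  obtain ⟨D, hD1, hDdiam⟩ := hDex
  have hKdist : ∀ w, ∀ p ∈ K w, ∀ q ∈ K w, dist p q ≤ D := fun w p hp q hq =>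
    (dist_le_diam_of_mem (hKc w).isBounded hp hq).trans (hDdiam w)
  -- the separation constant δ
  have hpair : ∀ p : ι × ι, ∃ δ > 0, src p.1 = src p.2 → p.1 ≠ p.2 →
      ∀ a ∈ S p.1 '' K (tgt p.1), ∀ b ∈ S p.2 '' K (tgt p.2), δ ≤ dist a b := by
    rintro ⟨i, j⟩
    by_cases h : src i = src j ∧ i ≠ j
    · obtain ⟨δ, hδ, hprop⟩ := gd_disjoint_dist ((hKc _).image (gdS_continuous hr hS i))
        ((hKc _).image (gdS_continuous hr hS j)).isClosed
        ((hKne _).image _) ((hKne _).image _) (hKdisj i j h.1 h.2)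
      exact ⟨δ, hδ, fun _ _ => hprop⟩
    · exact ⟨1, one_pos, fun h1 h2 => absurd ⟨h1, h2⟩ h⟩
  choose δf hδfpos hδfprop using hpair
  set δ : ℝ := min 1 (Finset.univ.inf' Finset.univ_nonempty δf) with hδdef
  have hδpos : 0 < δ := lt_min one_pos (by
    rw [Finset.lt_inf'_iff]
    exact fun p _ => hδfpos p)
  have hδ1 : δ ≤ 1 := min_le_left _ _
  have hδprop : ∀ i j, src i = src j → i ≠ j →
      ∀ a ∈ S i '' K (tgt i), ∀ b ∈ S j '' K (tgt j), δ ≤ dist a b := by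
    intro i j h1 h2 a ha b hb
    refine le_trans (le_trans (min_le_right _ _) (Finset.inf'_le δf (Finset.mem_univ (i, j)))) ?_
    exact hδfprop (i, j) h1 h2 a ha b hb
  -- uniqueness of the point coded by a path
  have huniq : ∀ e : ℕ → ι, (∀ k, tgt (e k) = src (e (k+1))) → ∀ x y : X,
      (∀ m, x ∈ gdCyl S src K e m) → (∀ m, y ∈ gdCyl S src K e m) → x = y := by
    intro e hch x y hx hy
    have hdd : ∀ m, dist x y ≤ (∏ k ∈ Finset.range m, r (e k)) * D := by
      intro m
      obtain ⟨p, hp, hpx⟩ := hx m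
      obtain ⟨q, hq, hqy⟩ := hy m
      rw [← hpx, ← hqy, gdCompS_dist hS]
      exact mul_le_mul_of_nonneg_left (hKdist _ p hp q hq)
        (Finset.prod_nonneg fun k _ => (hr (e k)).le)
    have hlim := (hdecay e hch).mul_const D
    rw [zero_mul] at hlim
    have h0 : dist x y ≤ 0 := ge_of_tendsto' hlim hdd
    exact dist_eq_zero.1 (le_antisymm h0 dist_nonneg)
  -- the coding map π
  have hπex : ∀ e : ℕ → ι, ∃ x : X, (∀ k, tgt (e k) = src (e (k+1))) →
      ∀ m, x ∈ gdCyl S src K e m := by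
    intro e
    by_cases hch : ∀ k, tgt (e k) = src (e (k+1))
    · obtain ⟨x, hx⟩ := IsCompact.nonempty_iInter_of_sequence_nonempty_isCompact_isClosed
        (fun m => gdCyl S src K e m) (hmono e hch) (fun m => hcylne e m)
        (hcylc e 0) (fun m => (hcylc e m).isClosed)
      exact ⟨x, fun _ m => Set.mem_iInter.1 hx m⟩
    · exact ⟨(hKne (src (e 0))).some, fun h => absurd h hch⟩
  choose π hπ using hπex
  -- address existence
  have hstep : ∀ (w : V) (y : X), y ∈ K w → ∃ i, src i = w ∧ ∃ z ∈ K (tgt i), S i z = y := by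
    intro w y hy
    rw [hKeq w] at hy
    simp only [Set.mem_iUnion, Set.mem_setOf_eq, Set.mem_image] at hy
    obtain ⟨i, hi, zz, hz, hzy⟩ := hy
    exact ⟨i, hi, zz, hz, hzy⟩
  choose st hst zf hzmem hzeq using hstep
  have haddr : ∀ (w : V) (x : X), ∃ e, x ∈ K w →
      gdIsPath src tgt w e ∧ ∀ m, x ∈ gdCyl S src K e m := by
    intro w x
    by_cases hx : x ∈ K w
    · set seq : ℕ → (Σ' (u : V) (p : X), p ∈ K u) := fun n =>
        Nat.rec (⟨w, x, hx⟩ : Σ' (u : V) (p : X), p ∈ K u)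
          (fun _ q => ⟨tgt (st q.1 q.2.1 q.2.2), zf q.1 q.2.1 q.2.2, hzmem q.1 q.2.1 q.2.2⟩) n
        with hseq
      set E : ℕ → ι := fun n => st (seq n).1 (seq n).2.1 (seq n).2.2 with hE
      have hseqfst : ∀ n, src (E n) = (seq n).1 := fun n => hst _ _ _
      have hsucc : ∀ n, (seq (n+1)).1 = tgt (E n) := fun n => rfl
      have hinv : ∀ m, gdCompS S E m ((seq m).2.1) = x := by
        intro m
        induction m with
        | zero => rfl
        | succ m ih =>
            show gdCompS S E m (S (E m) ((seq (m+1)).2.1)) = x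
            have h5 : S (E m) ((seq (m+1)).2.1) = (seq m).2.1 := hzeq _ _ _
            rw [h5]; exact ih
      refine ⟨E, fun _ => ⟨⟨hseqfst 0, fun k => ?_⟩, fun m => ?_⟩⟩
      · rw [hseqfst (k+1), hsucc k]
      · exact ⟨(seq m).2.1, by rw [hseqfst m]; exact (seq m).2.2, hinv m⟩
    · exact ⟨fun _ => hι.some, fun h => absurd h hx⟩
  choose addr haddr0 using haddr
  -- common source at the first splitting index
  have hdiffsrc : ∀ v (a b : ℕ → ι) m, gdIsPath src tgt v a → gdIsPath src tgt v b →
      (∀ k < m, a k = b k) → src (a m) = src (b m) := by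
    rintro v a b m ⟨ha0, hach⟩ ⟨hb0, hbch⟩ hpre
    cases m with
    | zero => rw [ha0, hb0]
    | succ k => rw [← hach k, ← hbch k, hpre k (Nat.lt_succ_self k)]
  -- core splitting lemma
  have hcore : ∀ v (a b : ℕ → ι) m (x y : X), gdIsPath src tgt v a → gdIsPath src tgt v b →
      (∀ k < m, a k = b k) →
      (∀ j, x ∈ gdCyl S src K a j) → (∀ j, y ∈ gdCyl S src K b j) →
      ∃ p q, p ∈ S (a m) '' K (tgt (a m)) ∧ q ∈ S (b m) '' K (tgt (b m)) ∧
        x = gdCompS S a m p ∧ y = gdCompS S a m q := by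
    intro v a b m x y hA hB hpre hx hy
    obtain ⟨p, hp, hpx⟩ := hx (m+1)
    obtain ⟨q, hq, hqy⟩ := hy (m+1)
    have hcomp : gdCompS S b m = gdCompS S a m := (gdCompS_congr S hpre).symm
    refine ⟨S (a m) p, S (b m) q, ⟨p, by rw [hA.2 m]; exact hp, rfl⟩,
      ⟨q, by rw [hB.2 m]; exact hq, rfl⟩, hpx.symm, ?_⟩
    have : (gdCompS S b m ∘ S (b m)) q = y := hqy
    rw [← this, Function.comp_apply, hcomp]
  -- address uniqueness
  have haddruniq : ∀ v (a b : ℕ → ι) (x : X), gdIsPath src tgt v a → gdIsPath src tgt v b →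
      (∀ m, x ∈ gdCyl S src K a m) → (∀ m, x ∈ gdCyl S src K b m) → a = b := by
    intro v a b x hA hB hxa hxb
    funext m
    induction m using Nat.strong_induction_on with
    | _ m ih =>
    by_contra hne
    obtain ⟨p, q, hp, hq, hxp, hxq⟩ := hcore v a b m x x hA hB (fun k hk => ih k hk) hxa hxb
    have hpq : p = q := gdCompS_injective hr hS a m (hxp.symm.trans hxq)
    have hd := hKdisj (a m) (b m) (hdiffsrc v a b m hA hB (fun k hk => ih k hk)) hne
    exact absurd (Set.mem_inter hp (hpq ▸ hq)) (by rw [hd]; exact notMem_empty p)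
  refine ⟨π, addr, δ, D, hδpos, hδ1, hD1, fun v e hE m => hπ e hE.2 m, ?_, ?_, ?_, ?_⟩
  · exact fun v x hx => haddr0 v x hx
  · -- addr v x = e
    intro v e x hE hx
    have hxK : x ∈ K v := by
      have h0 := hx 0
      obtain ⟨p, hp, hpx⟩ := h0
      have : p = x := hpx
      rw [← hE.1]
      exact this ▸ hp
    obtain ⟨hpath, hcyl⟩ := haddr0 v x hxK
    exact haddruniq v (addr v x) e x hpath hE hcyl hx
  · exact fun v e x y hE hx hy => huniq e hE.2 x y hx hy
  · -- the two-sided bound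
    intro v a b m x y hA hB hpre hne hx hy
    obtain ⟨p, q, hp, hq, hxp, hyq⟩ := hcore v a b m x y hA hB hpre hx hy
    have hd : dist x y = (∏ k ∈ Finset.range m, r (a k)) * dist p q := by
      rw [hxp, hyq, gdCompS_dist hS]
    have hPnn : (0:ℝ) ≤ ∏ k ∈ Finset.range m, r (a k) :=
      Finset.prod_nonneg fun k _ => (hr (a k)).le
    constructor
    · rw [hd]
      exact mul_le_mul_of_nonneg_left
        (hδprop (a m) (b m) (hdiffsrc v a b m hA hB hpre) hne p hp q hq) hPnn
    · rw [hd]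
      refine mul_le_mul_of_nonneg_left ?_ hPnn
      refine hKdist (src (a m)) p (hpiece (a m) hp) q ?_
      rw [hdiffsrc v a b m hA hB hpre]
      exact hpiece (b m) hq
section GDDecay
variable {V ι : Type}
lemma gd_prod_decay [Fintype V] [Fintype ι] (src tgt : ι → V) (r : ι → ℝ)
    (hr : ∀ e, 0 < r e)
    (hcycle : ∀ (e : ι) (es : List ι), List.Chain (fun a b => tgt a = src b) e es →
      tgt ((e :: es).getLast (List.cons_ne_nil _ _)) = src e →
      ((e :: es).map r).prod < 1) :
    ∃ C θ : ℝ, 0 < C ∧ 0 ≤ θ ∧ θ < 1 ∧ ∀ (e : ℕ → ι) (m : ℕ),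
      (∀ k, k + 1 < m → tgt (e k) = src (e (k + 1))) →
      (∏ k ∈ Finset.range m, r (e k)) ≤ C * θ ^ (m / (Fintype.card V + 1)) := by
  classical
  set N := Fintype.card V + 1 with hN
  -- the set of products along short cycles
  set Cyc : Set ℝ := {x | ∃ (f : ℕ → ι) (ℓ : ℕ), 1 ≤ ℓ ∧ ℓ ≤ N ∧
      (∀ k, k + 1 < ℓ → tgt (f k) = src (f (k + 1))) ∧ tgt (f (ℓ - 1)) = src (f 0) ∧
      x = ∏ k ∈ Finset.range ℓ, r (f k)} with hCyc
  have hCycFin : Cyc.Finite := by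
    apply Set.Finite.subset (((List.finite_length_le ι N).image (fun l => (l.map r).prod)))
    rintro x ⟨f, ℓ, h1, h2, _, _, rfl⟩
    refine ⟨List.ofFn (fun k : Fin ℓ => f k), by simpa using h2, ?_⟩
    show (List.map r (List.ofFn fun k : Fin ℓ => f k)).prod = _
    rw [List.map_ofFn, List.prod_ofFn]
    exact (Finset.prod_range fun k => r (f k)).symm
  have hCyclt : ∀ x ∈ Cyc, x < 1 := by
    rintro x ⟨f, ℓ, h1, _, hchain, hlast, rfl⟩
    obtain ⟨ℓ', rfl⟩ : ∃ ℓ', ℓ = ℓ' + 1 := ⟨ℓ - 1, (Nat.succ_pred_eq_of_pos h1).symm⟩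
    have hofn : (f 0 :: List.ofFn (fun k : Fin ℓ' => f (k + 1))) =
        List.ofFn (fun k : Fin (ℓ' + 1) => f k) := by
      rw [List.ofFn_succ]; rfl
    have hchain' : List.Chain (fun a b => tgt a = src b) (f 0)
        (List.ofFn (fun k : Fin ℓ' => f (k + 1))) := by
      show List.IsChain _ (f 0 :: List.ofFn (fun k : Fin ℓ' => f (k + 1)))
      rw [hofn, List.isChain_ofFn]
      intro i hi
      exact hchain i hi
    have hlast' : tgt ((f 0 :: List.ofFn (fun k : Fin ℓ' => f (k + 1))).getLast
        (List.cons_ne_nil _ _)) = src (f 0) := by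
      have h2 : (f 0 :: List.ofFn (fun k : Fin ℓ' => f (k + 1))).getLast
          (List.cons_ne_nil _ _) = f ℓ' := by
        have h3 := List.getLast_ofFn (f := fun k : Fin (ℓ' + 1) => f k)
          (by simp [List.ofFn_eq_nil_iff])
        have h4 : (f 0 :: List.ofFn (fun k : Fin ℓ' => f (k + 1))).getLast? = some (f ℓ') := by
          rw [hofn, List.getLast?_eq_getLast (l := List.ofFn (fun k : Fin (ℓ' + 1) => f k)) (by simp [List.ofFn_eq_nil_iff]), h3]
          simp
        have h5 := List.getLast?_eq_getLast (l := f 0 :: List.ofFn (fun k : Fin ℓ' => f (k + 1)))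
          (List.cons_ne_nil _ _)
        rw [h4] at h5
        exact (Option.some_inj.1 h5).symm
      rw [h2]
      simpa using hlast
    have := hcycle (f 0) _ hchain' hlast'
    calc ∏ k ∈ Finset.range (ℓ' + 1), r (f k)
        = ((f 0 :: List.ofFn (fun k : Fin ℓ' => f (k + 1))).map r).prod := by
          rw [hofn, List.map_ofFn, List.prod_ofFn]
          exact (Finset.prod_range fun k => r (f k))
      _ < 1 := this
  -- θ
  let F : Finset ℝ := insert 0 hCycFin.toFinset
  have hFne : F.Nonempty := ⟨0, Finset.mem_insert_self _ _⟩
  set θ : ℝ := F.max' hFne with hθdef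
  have hθ0 : 0 ≤ θ := Finset.le_max' F 0 (Finset.mem_insert_self _ _)
  have hθ1 : θ < 1 := by
    rw [hθdef, Finset.max'_lt_iff]
    intro x hx
    rcases Finset.mem_insert.1 hx with rfl | hx
    · norm_num
    · exact hCyclt x (hCycFin.mem_toFinset.1 hx)
  have hθmem : ∀ x ∈ Cyc, x ≤ θ := fun x hx =>
    Finset.le_max' F x (Finset.mem_insert_of_mem (hCycFin.mem_toFinset.2 hx))
  -- Rmax
  let G : Finset ℝ := insert 1 (Finset.univ.image r)
  have hGne : G.Nonempty := ⟨1, Finset.mem_insert_self _ _⟩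
  set Rm : ℝ := G.max' hGne with hRmdef
  have hRm1 : (1:ℝ) ≤ Rm := Finset.le_max' G 1 (Finset.mem_insert_self _ _)
  have hRmr : ∀ i, r i ≤ Rm := fun i =>
    Finset.le_max' G (r i) (Finset.mem_insert_of_mem (Finset.mem_image_of_mem r (Finset.mem_univ i)))
  refine ⟨Rm ^ N, θ, pow_pos (lt_of_lt_of_le one_pos hRm1) N, hθ0, hθ1, ?_⟩
  intro e m
  induction m using Nat.strong_induction_on generalizing e with
  | _ m ih =>
  intro hchain
  by_cases hm : m < N
  · have h1 : (∏ k ∈ Finset.range m, r (e k)) ≤ Rm ^ m := by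
      calc (∏ k ∈ Finset.range m, r (e k)) ≤ ∏ _k ∈ Finset.range m, Rm :=
            Finset.prod_le_prod (fun k _ => (hr (e k)).le) (fun k _ => hRmr (e k))
        _ = Rm ^ m := by rw [Finset.prod_const, Finset.card_range]
    have h2 : Rm ^ m ≤ Rm ^ N := pow_le_pow_right₀ hRm1 hm.le
    rw [Nat.div_eq_of_lt hm]
    simpa using h1.trans h2
  · push_neg at hm
    -- pigeonhole on the first N+1 vertices
    obtain ⟨i, j, hij, heq⟩ := Fintype.exists_ne_map_eq_of_card_lt
      (fun k : Fin N => src (e k)) (by simp [hN])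
    -- wlog i < j
    have key : ∀ (i j : ℕ), i < j → j < N → src (e i) = src (e j) →
        (∏ k ∈ Finset.range m, r (e k)) ≤ Rm ^ N * θ ^ (m / N) := by
      intro i j hI hjN hEQ
      set ℓ : ℕ := j - i with hℓ
      have hiℓ : i + ℓ = j := by omega
      have hℓ1 : 1 ≤ ℓ := by omega
      have hℓN : ℓ ≤ N := by omega
      have hjm : j < m := lt_of_lt_of_le hjN hm
      have him' : i ≤ m - ℓ := by omega
      -- the product along the cycle is in Cyc
      have hcycmem : (∏ k ∈ Finset.range ℓ, r (e (i + k))) ∈ Cyc := by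
        refine ⟨fun k => e (i + k), ℓ, hℓ1, hℓN, ?_, ?_, rfl⟩
        · intro k hk
          exact hchain (i + k) (by omega)
        · show tgt (e (i + (ℓ - 1))) = src (e (i + 0))
          have h1 : i + (ℓ - 1) = j - 1 := by omega
          have h2 : j - 1 + 1 = j := by omega
          rw [h1, show i + 0 = i from rfl]
          have := hchain (j - 1) (by omega)
          rw [h2] at this
          rw [this, ← hEQ]
      -- the reduced path
      set e' : ℕ → ι := fun k => if k < i then e k else e (k + ℓ) with he'
      have he'lt : ∀ k, k < i → e' k = e k := fun k hk => if_pos hk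
      have he'ge : ∀ k, i ≤ k → e' k = e (k + ℓ) := fun k hk => if_neg (by omega)
      have hchain' : ∀ k, k + 1 < m - ℓ → tgt (e' k) = src (e' (k + 1)) := by
        intro k hk
        rcases lt_trichotomy (k + 1) i with h | h | h
        · rw [he'lt k (by omega), he'lt (k + 1) h]
          exact hchain k (by omega)
        · rw [he'lt k (by omega), he'ge (k + 1) (by omega), h, hiℓ, ← hEQ, ← h]
          exact hchain k (by omega)
        · rw [he'ge k (by omega), he'ge (k + 1) (by omega)]
          have := hchain (k + ℓ) (by omega)
          rw [show k + ℓ + 1 = k + 1 + ℓ by omega] at this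
          exact this
      -- product splitting
      have hsplit : (∏ k ∈ Finset.range m, r (e k)) =
          (∏ k ∈ Finset.range ℓ, r (e (i + k))) * ∏ k ∈ Finset.range (m - ℓ), r (e' k) := by
        have hm1 : m = i + ℓ + (m - ℓ - i) := by omega
        have hm2 : m - ℓ = i + (m - ℓ - i) := by omega
        calc (∏ k ∈ Finset.range m, r (e k))
            = ∏ k ∈ Finset.range (i + ℓ + (m - ℓ - i)), r (e k) := by rw [← hm1]
          _ = ((∏ k ∈ Finset.range i, r (e k)) * ∏ k ∈ Finset.range ℓ, r (e (i + k))) *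
              ∏ k ∈ Finset.range (m - ℓ - i), r (e (i + ℓ + k)) := by
                rw [Finset.prod_range_add, Finset.prod_range_add]
          _ = (∏ k ∈ Finset.range ℓ, r (e (i + k))) *
              ((∏ k ∈ Finset.range i, r (e' k)) * ∏ k ∈ Finset.range (m - ℓ - i), r (e' (i + k))) := by
                have c1 : ∀ k ∈ Finset.range i, r (e' k) = r (e k) := fun k hk => by
                  rw [he'lt k (Finset.mem_range.1 hk)]
                have c2 : ∀ k ∈ Finset.range (m - ℓ - i), r (e' (i + k)) = r (e (i + ℓ + k)) :=
                  fun k hk => by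
                    rw [he'ge (i + k) (by omega), show i + k + ℓ = i + ℓ + k by omega]
                rw [Finset.prod_congr rfl c1, Finset.prod_congr rfl c2]
                ring
          _ = (∏ k ∈ Finset.range ℓ, r (e (i + k))) * ∏ k ∈ Finset.range (m - ℓ), r (e' k) := by
                rw [hm2, Finset.prod_range_add,
                  show i + (m - ℓ - i) - i = m - ℓ - i from by omega]
      have hred := ih (m - ℓ) (by omega) e' hchain'
      have hdiv : m / N ≤ (m - ℓ) / N + 1 := by
        have h1 : m ≤ (m - ℓ) + N := by omega
        calc m / N ≤ ((m - ℓ) + N) / N := Nat.div_le_div_right h1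
          _ = (m - ℓ) / N + 1 := Nat.add_div_right _ (by omega)
      have hrednn : (0:ℝ) ≤ ∏ k ∈ Finset.range (m - ℓ), r (e' k) :=
        Finset.prod_nonneg (fun k _ => (hr _).le)
      calc (∏ k ∈ Finset.range m, r (e k))
          = (∏ k ∈ Finset.range ℓ, r (e (i + k))) * ∏ k ∈ Finset.range (m - ℓ), r (e' k) := hsplit
        _ ≤ θ * (Rm ^ N * θ ^ ((m - ℓ) / N)) :=
            mul_le_mul (hθmem _ hcycmem) hred hrednn hθ0
        _ = Rm ^ N * θ ^ ((m - ℓ) / N + 1) := by rw [pow_succ]; ring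
        _ ≤ Rm ^ N * θ ^ (m / N) := by
            apply mul_le_mul_of_nonneg_left (pow_le_pow_of_le_one hθ0 hθ1.le hdiv)
            positivity
    rcases hij.lt_or_gt with hlt | hlt
    · exact key i j (Fin.lt_def.1 hlt) j.isLt heq
    · exact key j i (Fin.lt_def.1 hlt) i.isLt heq.symm
end GDDecay


theorem graph_directed_lipEquiv' {d : ℕ} {V ι : Type} [Fintype V] [Fintype ι]
    (src tgt : ι → V) (r : ι → ℝ)
    (S S' : ι → EuclideanSpace ℝ (Fin d) → EuclideanSpace ℝ (Fin d))
    (hr : ∀ e, 0 < r e)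
    (hS : ∀ e x y, dist (S e x) (S e y) = r e * dist x y)
    (hS' : ∀ e x y, dist (S' e x) (S' e y) = r e * dist x y)
    (hout : ∀ v : V, ∃ e, src e = v)
    (hcycle : ∀ (e : ι) (es : List ι), List.Chain (fun a b => tgt a = src b) e es →
      tgt ((e :: es).getLast (List.cons_ne_nil _ _)) = src e →
      ((e :: es).map r).prod < 1)
    (K K' : V → Set (EuclideanSpace ℝ (Fin d)))
    (hKc : ∀ v, IsCompact (K v)) (hKne : ∀ v, (K v).Nonempty)
    (hK'c : ∀ v, IsCompact (K' v)) (hK'ne : ∀ v, (K' v).Nonempty)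
    (hKeq : ∀ v, K v = ⋃ e ∈ {e | src e = v}, S e '' K (tgt e))
    (hK'eq : ∀ v, K' v = ⋃ e ∈ {e | src e = v}, S' e '' K' (tgt e))
    (hKdisj : ∀ e f, src e = src f → e ≠ f → (S e '' K (tgt e)) ∩ (S f '' K (tgt f)) = ∅)
    (hK'disj : ∀ e f, src e = src f → e ≠ f →
      (S' e '' K' (tgt e)) ∩ (S' f '' K' (tgt f)) = ∅) :
    ∀ v, ∃ (f : EuclideanSpace ℝ (Fin d) → EuclideanSpace ℝ (Fin d)) (c c' : ℝ),
      0 < c ∧ c ≤ c' ∧ Set.BijOn f (K v) (K' v) ∧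
      ∀ x ∈ K v, ∀ y ∈ K v, c * dist x y ≤ dist (f x) (f y) ∧
        dist (f x) (f y) ≤ c' * dist x y := by
  intro v
  classical
  haveI hι : Nonempty ι := ⟨(hout v).choose⟩
  -- decay of products along paths
  obtain ⟨C, θ, hC, hθ0, hθ1, hbound⟩ := gd_prod_decay src tgt r hr hcycle
  have hdecay : ∀ e : ℕ → ι, (∀ k, tgt (e k) = src (e (k+1))) →
      Filter.Tendsto (fun m => ∏ k ∈ Finset.range m, r (e k)) Filter.atTop (nhds 0) := by
    intro e hch
    have hub : ∀ m, (∏ k ∈ Finset.range m, r (e k)) ≤ C * θ ^ (m / (Fintype.card V + 1)) :=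
      fun m => hbound e m (fun k _ => hch k)
    have hdiv : Filter.Tendsto (fun m : ℕ => m / (Fintype.card V + 1))
        Filter.atTop Filter.atTop := by
      apply Filter.tendsto_atTop_atTop.2
      intro b
      exact ⟨b * (Fintype.card V + 1), fun m hm =>
        (Nat.le_div_iff_mul_le (Nat.succ_pos _)).2 hm⟩
    have hθt : Filter.Tendsto (fun k : ℕ => θ ^ k) Filter.atTop (nhds 0) :=
      tendsto_pow_atTop_nhds_zero_of_lt_one hθ0 hθ1
    have hgt : Filter.Tendsto (fun m : ℕ => C * θ ^ (m / (Fintype.card V + 1)))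
        Filter.atTop (nhds 0) := by
      have h := (hθt.comp hdiv).const_mul C
      simpa using h
    exact squeeze_zero (fun m => Finset.prod_nonneg fun k _ => (hr _).le) hub hgt
  obtain ⟨π1, addr1, δ1, D1, hδ1pos, hδ11, hD11, hπ1, haddr1, huniqaddr1, hpt1, hbd1⟩ :=
    gd_coding src tgt r S hr hS K hKc hKne hKeq hKdisj hdecay hι
  obtain ⟨π2, addr2, δ2, D2, hδ2pos, hδ21, hD21, hπ2, haddr2, huniqaddr2, hpt2, hbd2⟩ :=
    gd_coding src tgt r S' hr hS' K' hK'c hK'ne hK'eq hK'disj hdecay hι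
  have hD1pos : (0:ℝ) < D1 := lt_of_lt_of_le one_pos hD11
  have hD2pos : (0:ℝ) < D2 := lt_of_lt_of_le one_pos hD21
  have hcyl0 : ∀ (e : ℕ → ι), gdCyl S src K e 0 = K (src (e 0)) := fun e => by
    simp [gdCyl, gdCompS]
  have hcyl0' : ∀ (e : ℕ → ι), gdCyl S' src K' e 0 = K' (src (e 0)) := fun e => by
    simp [gdCyl, gdCompS]
  set f : EuclideanSpace ℝ (Fin d) → EuclideanSpace ℝ (Fin d) :=
    fun x => if h : x ∈ K v then π2 (addr1 v x) else x with hf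
  have hfval : ∀ x ∈ K v, f x = π2 (addr1 v x) := fun x hx => dif_pos hx
  have hfcyl : ∀ x (hx : x ∈ K v), ∀ m, f x ∈ gdCyl S' src K' (addr1 v x) m := by
    intro x hx m
    rw [hfval x hx]
    exact hπ2 v (addr1 v x) (haddr1 v x hx).1 m
  have hsplit : ∀ x, x ∈ K v → ∀ y, y ∈ K v → x ≠ y → ∃ m,
      (∀ k < m, addr1 v x k = addr1 v y k) ∧ addr1 v x m ≠ addr1 v y m := by
    intro x hx y hy hxy
    have hne : ∃ m, addr1 v x m ≠ addr1 v y m := by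
      by_contra hc
      push_neg at hc
      have heqa : addr1 v x = addr1 v y := funext hc
      exact hxy (hpt1 v (addr1 v x) x y (haddr1 v x hx).1 (haddr1 v x hx).2
        (by rw [heqa]; exact (haddr1 v y hy).2))
    exact ⟨Nat.find hne, fun k hk => not_not.1 (Nat.find_min hne hk), Nat.find_spec hne⟩
  refine ⟨f, δ2 / D1, D2 / δ1, div_pos hδ2pos hD1pos, ?_, ⟨?_, ?_, ?_⟩, ?_⟩
  · -- c ≤ c'
    have h1 : δ2 / D1 ≤ 1 := (div_le_one hD1pos).2 (hδ21.trans hD11)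
    have h2 : (1:ℝ) ≤ D2 / δ1 := (one_le_div hδ1pos).2 (hδ11.trans hD21)
    exact h1.trans h2
  · -- MapsTo
    intro x hx
    have h := hfcyl x hx 0
    rw [hcyl0'] at h
    rw [(haddr1 v x hx).1.1] at h
    exact h
  · -- InjOn
    intro x hx y hy hfeq
    by_contra hxy
    obtain ⟨m, hpre, hne⟩ := hsplit x hx y hy hxy
    have hb := (hbd2 v (addr1 v x) (addr1 v y) m (f x) (f y) (haddr1 v x hx).1
      (haddr1 v y hy).1 hpre hne (hfcyl x hx) (hfcyl y hy)).1
    rw [hfeq, dist_self] at hb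
    have hP : 0 < (∏ k ∈ Finset.range m, r (addr1 v x k)) * δ2 :=
      mul_pos (Finset.prod_pos fun k _ => hr _) hδ2pos
    exact absurd hb (not_le.2 hP)
  · -- SurjOn
    intro y hy
    obtain ⟨hpath2, hcyl2⟩ := haddr2 v y hy
    set a : ℕ → ι := addr2 v y with ha
    set x : EuclideanSpace ℝ (Fin d) := π1 a with hxdef
    have hxcyl : ∀ m, x ∈ gdCyl S src K a m := hπ1 v a hpath2
    have hxK : x ∈ K v := by
      have h := hxcyl 0
      rw [hcyl0, hpath2.1] at h
      exact h
    refine ⟨x, hxK, ?_⟩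
    have haeq : addr1 v x = a := huniqaddr1 v a x hpath2 hxcyl
    rw [hfval x hxK, haeq]
    exact hpt2 v a (π2 a) y hpath2 (hπ2 v a hpath2) hcyl2
  · -- bi-Lipschitz bounds
    intro x hx y hy
    rcases eq_or_ne x y with rfl | hxy
    · simp
    obtain ⟨m, hpre, hne⟩ := hsplit x hx y hy hxy
    set P : ℝ := ∏ k ∈ Finset.range m, r (addr1 v x k) with hP
    obtain ⟨hb1l, hb1u⟩ := hbd1 v (addr1 v x) (addr1 v y) m x y (haddr1 v x hx).1
      (haddr1 v y hy).1 hpre hne (haddr1 v x hx).2 (haddr1 v y hy).2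
    obtain ⟨hb2l, hb2u⟩ := hbd2 v (addr1 v x) (addr1 v y) m (f x) (f y) (haddr1 v x hx).1
      (haddr1 v y hy).1 hpre hne (hfcyl x hx) (hfcyl y hy)
    constructor
    · calc δ2 / D1 * dist x y ≤ δ2 / D1 * (P * D1) :=
            mul_le_mul_of_nonneg_left hb1u (div_nonneg hδ2pos.le hD1pos.le)
        _ = P * δ2 := by field_simp
        _ ≤ dist (f x) (f y) := hb2l
    · calc dist (f x) (f y) ≤ P * D2 := hb2u
        _ = D2 / δ1 * (P * δ1) := by field_simp
        _ ≤ D2 / δ1 * dist x y :=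
            mul_le_mul_of_nonneg_left hb1l (div_nonneg hD2pos.le hδ1pos.le)

/-- Lemma 3.1: dust-like graph-directed sets on the same graph whose
corresponding similarities have the same contraction ratios are Lipschitz equivalent. -/
theorem graph_directed_lipEquiv {d : ℕ} {V ι : Type} [Fintype V] [Fintype ι]
    (src tgt : ι → V) (r : ι → ℝ)
    (S S' : ι → EuclideanSpace ℝ (Fin d) → EuclideanSpace ℝ (Fin d))
    (hr : ∀ e, 0 < r e)
    (hS : ∀ e x y, dist (S e x) (S e y) = r e * dist x y)
    (hS' : ∀ e x y, dist (S' e x) (S' e y) = r e * dist x y)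
    (hout : ∀ v : V, ∃ e, src e = v)
    (hcycle : ∀ (e : ι) (es : List ι), List.Chain (fun a b => tgt a = src b) e es →
      tgt ((e :: es).getLast (List.cons_ne_nil _ _)) = src e →
      ((e :: es).map r).prod < 1)
    (K K' : V → Set (EuclideanSpace ℝ (Fin d)))
    (hKc : ∀ v, IsCompact (K v)) (hKne : ∀ v, (K v).Nonempty)
    (hK'c : ∀ v, IsCompact (K' v)) (hK'ne : ∀ v, (K' v).Nonempty)
    (hKeq : ∀ v, K v = ⋃ e ∈ {e | src e = v}, S e '' K (tgt e))
    (hK'eq : ∀ v, K' v = ⋃ e ∈ {e | src e = v}, S' e '' K' (tgt e))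
    (hKdisj : ∀ e f, src e = src f → e ≠ f → (S e '' K (tgt e)) ∩ (S f '' K (tgt f)) = ∅)
    (hK'disj : ∀ e f, src e = src f → e ≠ f →
      (S' e '' K' (tgt e)) ∩ (S' f '' K' (tgt f)) = ∅) :
    ∀ v, LipEquivOn (K v) (K' v) :=
  graph_directed_lipEquiv' src tgt r S S' hr hS hS' hout hcycle K K' hKc hKne hK'c hK'ne
    hKeq hK'eq hKdisj hK'disj
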